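/- Let p be an odd integer and a_1,...,a_r integers with all pairwise differences coprime to p. Then the r×r Vandermonde matrix V with entries V[i][j] = x^{(j-1)a_i}, viewed over the quotient ring F_2[x]/M_p(x), is invertible. -/

import Mathlib

open Polynomial

namespace VdmAux

noncomputable def Mp (p : ℕ) : Polynomial (ZMod 2) := ∑ i ∈ Finset.range p, X ^ i

noncomputable def Iq (p : ℕ) : Ideal (Polynomial (ZMod 2)) := Ideal.span {Mp p}

noncomputable def φ (p : ℕ) : Polynomial (ZMod 2) →+* (Polynomial (ZMod 2) ⧸ Iq p) :=
  Ideal.Quotient.mk (Iq p)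

lemma x_pow_p (p : ℕ) : (φ p X) ^ p = 1 := by
  have hmem : (X : Polynomial (ZMod 2)) ^ p - 1 ∈ Iq p := by
    rw [← geom_sum_mul]
    exact Ideal.mul_mem_right _ _ (Ideal.subset_span rfl)
  have : φ p (X ^ p) = φ p 1 := Ideal.Quotient.eq.mpr hmem
  simpa using this

lemma pow_modEq (p : ℕ) {m n : ℕ} (h : m ≡ n [MOD p]) : φ p X ^ m = φ p X ^ n := by
  have hm := Nat.div_add_mod m p
  have hn := Nat.div_add_mod n p
  have key : ∀ k : ℕ, φ p X ^ k = φ p X ^ (k % p) := by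
    intro k
    conv_lhs => rw [← Nat.div_add_mod k p]
    rw [pow_add, pow_mul, x_pow_p, one_pow, one_mul]
  rw [key m, key n, h]

lemma x_unit (p : ℕ) (hp : 0 < p) : IsUnit (φ p X) := by
  apply IsUnit.of_mul_eq_one (φ p X ^ (p - 1))
  rw [← pow_succ']
  have : p - 1 + 1 = p := Nat.succ_pred_eq_of_pos hp
  rw [this, x_pow_p]

lemma x_sub_one_unit (p : ℕ) (hp : Odd p) : IsUnit (φ p X - 1) := by
  have heval : (Mp p).eval 1 = 1 := by
    have h1 : (Mp p).eval 1 = (p : ZMod 2) := by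
      simp [Mp, eval_finset_sum]
    obtain ⟨m, hm⟩ := hp
    subst hm
    rw [h1]
    push_cast
    rw [show ((2 : ZMod 2)) = 0 from rfl]
    ring
  have hdvd : (X - C 1 : Polynomial (ZMod 2)) ∣ Mp p - C ((Mp p).eval 1) :=
    X_sub_C_dvd_sub_C_eval
  rw [heval, map_one] at hdvd
  obtain ⟨q, hq⟩ := hdvd
  have h0 : φ p (Mp p) = 0 := Ideal.Quotient.eq_zero_iff_mem.mpr (Ideal.subset_span rfl)
  have := congrArg (φ p) hq
  simp only [map_sub, map_mul, map_one, h0] at this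
  -- this : 0 - 1 = (φ p X - 1) * φ p q
  apply IsUnit.of_mul_eq_one (-(φ p q))
  linear_combination this

lemma pow_sub_one_unit (p : ℕ) (hp : Odd p) {k : ℕ} (h : Nat.Coprime k p) :
    IsUnit (φ p X ^ k - 1) := by
  have hp0 : 0 < p := hp.pos
  have htotpos : 0 < Nat.totient p := Nat.totient_pos.mpr hp0
  have htot : k ^ Nat.totient p ≡ 1 [MOD p] := Nat.ModEq.pow_totient h
  have hmul : k * k ^ (Nat.totient p - 1) = k ^ Nat.totient p := by
    rw [← pow_succ']
    congr 1
    omega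
  have h1 : (φ p X ^ k) ^ (k ^ (Nat.totient p - 1)) = φ p X := by
    rw [← pow_mul, hmul]
    have := pow_modEq p htot
    simpa using this
  have h2 : (∑ i ∈ Finset.range (k ^ (Nat.totient p - 1)), (φ p X ^ k) ^ i) *
      (φ p X ^ k - 1) = φ p X - 1 := by
    rw [geom_sum_mul, h1]
  exact isUnit_of_mul_isUnit_right (h2 ▸ x_sub_one_unit p hp)

lemma key_unit (p : ℕ) (hp : Odd p) (b c : ℕ)
    (h : Int.gcd ((c : ℤ) - (b : ℤ)) (p : ℤ) = 1) :
    IsUnit (φ p X ^ c - φ p X ^ b) := by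
  rcases le_total b c with hbc | hbc
  · set k := c - b with hk
    have hcop : Nat.Coprime k p := by
      have : ((c : ℤ) - (b : ℤ)) = (k : ℤ) := by push_cast; omega
      rw [this, Int.gcd_natCast_natCast] at h
      exact h
    have hfac : φ p X ^ c - φ p X ^ b = φ p X ^ b * (φ p X ^ k - 1) := by
      rw [mul_sub, mul_one, ← pow_add]
      congr 2
      omega
    rw [hfac]
    exact ((x_unit p hp.pos).pow b).mul (pow_sub_one_unit p hp hcop)
  · set k := b - c with hk
    have hcop : Nat.Coprime k p := by
      have : ((c : ℤ) - (b : ℤ)) = -(k : ℤ) := by push_cast; omega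
      rw [this, Int.neg_gcd, Int.gcd_natCast_natCast] at h
      exact h
    have hfac : φ p X ^ c - φ p X ^ b = -(φ p X ^ c * (φ p X ^ k - 1)) := by
      rw [mul_sub, mul_one, ← pow_add]
      have : c + k = b := by omega
      rw [this]
      ring
    rw [hfac]
    exact (((x_unit p hp.pos).pow c).mul (pow_sub_one_unit p hp hcop)).neg

end VdmAux

theorem vandermonde_invertible_mod_Mp (p r : ℕ) (hp : Odd p) (a : Fin r → ℕ)
    (ha : ∀ i j : Fin r, i ≠ j → Int.gcd ((a i : ℤ) - (a j : ℤ)) (p : ℤ) = 1) :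
    IsUnit (Matrix.of fun i j : Fin r =>
      Ideal.Quotient.mk
        (Ideal.span ({∑ i ∈ Finset.range p, (X : Polynomial (ZMod 2)) ^ i} :
          Set (Polynomial (ZMod 2))))
        ((X : Polynomial (ZMod 2)) ^ ((j : ℕ) * a i))) := by
  have hM : (Matrix.of fun i j : Fin r =>
      Ideal.Quotient.mk
        (Ideal.span ({∑ i ∈ Finset.range p, (X : Polynomial (ZMod 2)) ^ i} :
          Set (Polynomial (ZMod 2))))
        ((X : Polynomial (ZMod 2)) ^ ((j : ℕ) * a i)))
      = Matrix.vandermonde (fun i => VdmAux.φ p X ^ a i) := by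
    ext i j
    show VdmAux.φ p (X ^ ((j : ℕ) * a i)) = (VdmAux.φ p X ^ a i) ^ (j : ℕ)
    rw [map_pow, ← pow_mul, mul_comm]
  rw [hM]
  refine (Matrix.isUnit_iff_isUnit_det _).mpr ?_
  rw [Matrix.det_vandermonde]
  apply Finset.prod_induction _ IsUnit (fun _ _ => IsUnit.mul) isUnit_one
  intro i _
  apply Finset.prod_induction _ IsUnit (fun _ _ => IsUnit.mul) isUnit_one
  intro j hj
  have hij : j ≠ i := by
    rcases Finset.mem_Ioi.mp hj with h
    exact ne_of_gt h
  exact VdmAux.key_unit p hp (a i) (a j) (ha j i hij)
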